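/- Let I be a nil two-sided ideal of a ring R (every element of I is nilpotent). Then R is a CSNC ring if and only if the quotient ring R/I is a CSNC ring. -/

import Mathlib

/-- An element `a` of a ring is *clean* if `a = e + u` for some idempotent `e` and unit `u`. -/
def IsCleanElem {R : Type*} [Ring R] (a : R) : Prop :=
  ∃ e u : R, IsIdempotentElem e ∧ IsUnit u ∧ a = e + u

/-- An element `a` of a ring is *strongly nil-clean* if `a = e + q` for some idempotent `e`
and nilpotent `q` with `e * q = q * e`. -/
def IsStronglyNilCleanElem {R : Type*} [Ring R] (a : R) : Prop :=
  ∃ e q : R, IsIdempotentElem e ∧ IsNilpotent q ∧ e * q = q * e ∧ a = e + q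

/-- A ring is a *CSNC ring* if every clean element is strongly nil-clean. -/
def IsCSNCRing (R : Type*) [Ring R] : Prop :=
  ∀ a : R, IsCleanElem a → IsStronglyNilCleanElem a

open Polynomial in
lemma snc_iff_nilpotent {R : Type*} [Ring R] (a : R) :
    IsStronglyNilCleanElem a ↔ IsNilpotent (a - a * a) := by
  constructor
  · rintro ⟨e, q, he, hq, hc, rfl⟩
    have hceq : Commute e q := hc
    have key : (e + q) - (e + q) * (e + q) = q * (1 - e - e - q) := by
      simp only [mul_add, add_mul, mul_sub, sub_mul, mul_one, one_mul, he.eq, hc]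
      abel
    rw [key]
    exact Commute.isNilpotent_mul_right
      ((((Commute.one_right q).sub_right hceq.symm).sub_right hceq.symm).sub_right (Commute.refl q)) hq
  · rintro ⟨n, hn⟩
    have hn' : (a - a ^ 2) ^ (n + 1) = 0 := by
      rw [pow_succ]
      rw [show a - a ^ 2 = a - a * a by rw [sq]] at *
      rw [hn, zero_mul]
    set m := n + 1 with hm
    have he : IsIdempotentElem (1 - (1 - a ^ m) ^ m) :=
      isIdempotentElem_one_sub_one_sub_pow_pow a m hn'
    set e := 1 - (1 - a ^ m) ^ m with hedef
    have hcomm : Commute a e := by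
      have h1 : Commute a ((1 - a ^ m) ^ m) :=
        ((Commute.one_right a).sub_right ((Commute.refl a).pow_right m)).pow_right m
      exact (Commute.one_right a).sub_right h1
    -- polynomial divisibility: (X - X^2) ∣ (X - P)
    have hP : (X - X ^ 2 : ℤ[X]) ∣ X - (1 - (1 - X ^ m) ^ m) := by
      have hXP : (X : ℤ[X]) ∣ 1 - (1 - X ^ m) ^ m := by
        have := sub_dvd_pow_sub_pow (1 : ℤ[X]) (1 - X ^ m) m
        rw [sub_sub_cancel, one_pow] at this
        exact dvd_trans (dvd_pow_self X (by omega : m ≠ 0)) this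
      have h1 : (X : ℤ[X]) ∣ X - (1 - (1 - X ^ m) ^ m) := dvd_sub dvd_rfl hXP
      have h2 : (1 - X : ℤ[X]) ∣ X - (1 - (1 - X ^ m) ^ m) := by
        have h2a : (1 - X : ℤ[X]) ∣ (1 - X ^ m) := by
          simpa using sub_dvd_pow_sub_pow (1 : ℤ[X]) X m
        have h2b : (1 - X : ℤ[X]) ∣ (1 - X ^ m) ^ m :=
          dvd_trans h2a (dvd_pow_self _ (by omega : m ≠ 0))
        have h2c : (1 - X : ℤ[X]) ∣ 1 - (1 - (1 - X ^ m) ^ m) := by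
          simpa [sub_sub_cancel] using h2b
        have h2d := dvd_sub h2c (dvd_refl (1 - X : ℤ[X]))
        have heq : (1 - (1 - (1 - X ^ m) ^ m) : ℤ[X]) - (1 - X) =
            X - (1 - (1 - X ^ m) ^ m) := by ring
        rwa [heq] at h2d
      have hco : IsCoprime (X : ℤ[X]) (1 - X) := ⟨1, 1, by ring⟩
      have := hco.mul_dvd h1 h2
      simpa [show (X : ℤ[X]) * (1 - X) = X - X ^ 2 by ring] using this
    have hPm := pow_dvd_pow_of_dvd hP m
    have := map_dvd (aeval a) hPm
    simp only [map_pow, map_sub, map_one, aeval_X, hn'] at this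
    rw [zero_dvd_iff] at this
    refine ⟨e, a - e, he, ⟨m, ?_⟩, (hcomm.symm.sub_right (Commute.refl e)).eq, by abel⟩
    exact this

lemma isUnit_of_map_isUnit {R S : Type*} [Ring R] [Ring S] (f : R →+* S)
    (hsurj : Function.Surjective f) (hker : ∀ x ∈ RingHom.ker f, IsNilpotent x)
    (u : R) (h : IsUnit (f u)) : IsUnit u := by
  obtain ⟨v, hv⟩ := hsurj (↑h.unit⁻¹ : S)
  have h1 : f (u * v) = 1 := by rw [map_mul, hv, IsUnit.mul_val_inv]
  have h2 : f (v * u) = 1 := by rw [map_mul, hv, IsUnit.val_inv_mul]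
  have hu1 : IsUnit (u * v) := by
    have : IsNilpotent (u * v - 1) := hker _ (by simp [RingHom.mem_ker, h1])
    simpa using this.isUnit_one_add
  have hu2 : IsUnit (v * u) := by
    have : IsNilpotent (v * u - 1) := hker _ (by simp [RingHom.mem_ker, h2])
    simpa using this.isUnit_one_add
  obtain ⟨b, hb⟩ := hu1.exists_right_inv
  obtain ⟨c, hc⟩ := hu2.exists_left_inv
  have hr : u * (v * b) = 1 := by rw [← mul_assoc]; exact hb
  have hl : (c * v) * u = 1 := by rw [mul_assoc]; exact hc
  have hbc : c * v = v * b := by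
    calc c * v = (c * v) * (u * (v * b)) := by rw [hr, mul_one]
    _ = ((c * v) * u) * (v * b) := by noncomm_ring
    _ = v * b := by rw [hl, one_mul]
  exact ⟨⟨u, v * b, hr, by rw [← hbc]; exact hl⟩, rfl⟩

theorem stmt_12 (R : Type*) [Ring R] (I : TwoSidedIdeal R)
    (hI : ∀ x ∈ I, IsNilpotent x) :
    IsCSNCRing R ↔ IsCSNCRing I.ringCon.Quotient := by
  set f : R →+* I.ringCon.Quotient := I.ringCon.mk' with hf
  have hsurj : Function.Surjective f := fun x => Quot.induction_on x fun r => ⟨r, rfl⟩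
  have hker : ∀ x ∈ RingHom.ker f, IsNilpotent x := by
    intro x hx
    apply hI
    rw [TwoSidedIdeal.mem_iff, ← RingCon.eq]
    rw [RingHom.mem_ker] at hx
    calc (x : I.ringCon.Quotient) = f x := rfl
    _ = 0 := hx
    _ = f 0 := (map_zero f).symm
    _ = (0 : R) := rfl
  constructor
  · intro hR b hb
    obtain ⟨eb, ub, heb, hub, rfl⟩ := hb
    obtain ⟨e, he, hfe⟩ := exists_isIdempotentElem_eq_of_ker_isNilpotent f hker eb
      (hsurj eb) heb
    obtain ⟨u, hfu⟩ := hsurj ub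
    have hu : IsUnit u := isUnit_of_map_isUnit f hsurj hker u (by rw [hfu]; exact hub)
    have ha : IsCleanElem (e + u) := ⟨e, u, he, hu, rfl⟩
    have := (snc_iff_nilpotent (e + u)).mp (hR _ ha)
    have hmap : IsNilpotent (f ((e + u) - (e + u) * (e + u))) := this.map f
    rw [snc_iff_nilpotent]
    simpa [map_sub, map_add, map_mul, hfe, hfu] using hmap
  · intro hQ a ha
    obtain ⟨e, u, he, hu, rfl⟩ := ha
    have hclean : IsCleanElem (f (e + u)) := by
      refine ⟨f e, f u, ?_, hu.map f, by rw [map_add]⟩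
      show f e * f e = f e
      rw [← map_mul, he.eq]
    have := (snc_iff_nilpotent _).mp (hQ _ hclean)
    rw [snc_iff_nilpotent]
    obtain ⟨n, hn⟩ := this
    have hker' : ((e + u) - (e + u) * (e + u)) ^ n ∈ RingHom.ker f := by
      rw [RingHom.mem_ker, map_pow, map_sub, map_mul]
      exact hn
    obtain ⟨k, hk⟩ := hker _ hker'
    exact ⟨n * k, by rw [pow_mul]; exact hk⟩
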